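/- Let (\Omega, \mu) be a measure space with 0 < \mu(\Omega) < \infty, and let \{\Delta_i\}_{i \in I} be a finite measurable partition of \Omega with \mu(\Delta_i) > 0 and \mu(\Delta_i) < \infty for every i. Let TOL > 0 and set LocTol_i := \frac{1}{2} \frac{TOL^2}{\mu(\Omega)} \mu(\Delta_i). Let p \in L^2(\Omega, \mu) and let f : \Omega \to \mathbb{R} be measurable with \int_\Omega |f|^4 d\mu < \infty. Then \int_{\Omega} p\, f \, d\mu \leq \left( \sum_{i \in I} \frac{\|f\|_{L^4(\Delta_i)}^4}{LocTol_i} \right)^{1/4} \left( \frac{\max_{i} \mu(\Delta_i)}{2} \right)^{1/4} TOL^{1/2} \, \|p\|_{L^2(\Omega)}. -/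

import Mathlib

open MeasureTheory

theorem localized_pressure_divergence_bound
    {Ω : Type*} [MeasurableSpace Ω] (μ : Measure Ω)
    (hΩpos : 0 < μ Set.univ) (hΩfin : μ Set.univ < ⊤)
    {I : Type*} [Fintype I] [Nonempty I] (Δ : I → Set Ω)
    (hmeas : ∀ i, MeasurableSet (Δ i))
    (hdisj : Pairwise (Function.onFun Disjoint Δ))
    (hcover : (⋃ i, Δ i) = Set.univ)
    (hΔpos : ∀ i, 0 < μ (Δ i)) (hΔfin : ∀ i, μ (Δ i) < ⊤)
    (TOL : ℝ) (hTOL : 0 < TOL)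
    (LocTol : I → ℝ)
    (hLocTol : ∀ i, LocTol i = 1 / 2 * TOL ^ 2 / (μ Set.univ).toReal * (μ (Δ i)).toReal)
    (p : Ω → ℝ) (hp : MemLp p 2 μ)
    (f : Ω → ℝ) (hf : Measurable f) (hf4 : Integrable (fun x => |f x| ^ 4) μ) :
    ∫ x, p x * f x ∂μ ≤
      (∑ i, (∫ x in Δ i, |f x| ^ 4 ∂μ) / LocTol i) ^ ((1 : ℝ) / 4) *
        ((⨆ i, (μ (Δ i)).toReal) / 2) ^ ((1 : ℝ) / 4) * TOL ^ ((1 : ℝ) / 2) *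
        (∫ x, |p x| ^ 2 ∂μ) ^ ((1 : ℝ) / 2) := by
  haveI : IsFiniteMeasure μ := ⟨hΩfin⟩
  have hμΩ : 0 < (μ Set.univ).toReal := ENNReal.toReal_pos hΩpos.ne' hΩfin.ne
  set m : I → ℝ := fun i => (μ (Δ i)).toReal with hm
  have hmpos : ∀ i, 0 < m i := fun i => ENNReal.toReal_pos (hΔpos i).ne' (hΔfin i).ne
  set F : I → ℝ := fun i => ∫ x in Δ i, |f x| ^ 4 ∂μ with hFdef
  have hFnonneg : ∀ i, 0 ≤ F i := fun i => integral_nonneg (fun x => by positivity)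
  have hLpos : ∀ i, 0 < LocTol i := fun i => by
    rw [hLocTol i]; have := hmpos i; positivity
  have h2 : ENNReal.ofReal (2 : ℝ) = 2 := by norm_num
  have hpq : Real.HolderConjugate 2 2 := .two_two
  have hfmeas : AEStronglyMeasurable f μ := hf.aestronglyMeasurable
  -- f ∈ L²
  have hsq_int : Integrable (fun x => f x ^ 2) μ := by
    refine (hf4.add (integrable_const 1)).mono'
      ((hf.pow_const 2).aestronglyMeasurable) ?_
    refine Filter.Eventually.of_forall fun x => ?_
    have h1 : ‖f x ^ 2‖ = |f x| ^ 2 := by rw [Real.norm_eq_abs, abs_pow]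
    rw [h1]
    simp only [Pi.add_apply]
    nlinarith [sq_nonneg (|f x| ^ 2 - 1), abs_nonneg (f x)]
  have hfL2 : MemLp f 2 μ := (memLp_two_iff_integrable_sq hfmeas).2 hsq_int
  have hf2L2 : MemLp (fun x => |f x| ^ 2) 2 μ := by
    refine (memLp_two_iff_integrable_sq
      ((hf.abs.pow_const 2).aestronglyMeasurable)).2 ?_
    have : (fun x => (|f x| ^ 2) ^ 2) = fun x => |f x| ^ 4 := by
      funext x; ring
    rw [this]; exact hf4
  -- global Hölder
  have hglobal : ∫ x, p x * f x ∂μ ≤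
      (∫ x, |p x| ^ 2 ∂μ) ^ ((1 : ℝ) / 2) * (∫ x, |f x| ^ 2 ∂μ) ^ ((1 : ℝ) / 2) := by
    have H := integral_mul_norm_le_Lp_mul_Lq (μ := μ) (f := p) (g := f) hpq
      (by rw [h2]; exact hp) (by rw [h2]; exact hfL2)
    simp only [Real.norm_eq_abs, Real.rpow_two] at H
    calc ∫ x, p x * f x ∂μ ≤ |∫ x, p x * f x ∂μ| := le_abs_self _
      _ = ‖∫ x, p x * f x ∂μ‖ := (Real.norm_eq_abs _).symm
      _ ≤ ∫ x, ‖p x * f x‖ ∂μ := norm_integral_le_integral_norm _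
      _ = ∫ a, |p a| * |f a| ∂μ := by simp [Real.norm_eq_abs, abs_mul]
      _ ≤ _ := H
  -- local Hölder on each Δ i
  have hlocal : ∀ i, (∫ x in Δ i, |f x| ^ 2 ∂μ) ≤
      (m i) ^ ((1 : ℝ) / 2) * (F i) ^ ((1 : ℝ) / 2) := by
    intro i
    haveI : IsFiniteMeasure (μ.restrict (Δ i)) :=
      ⟨by rw [Measure.restrict_apply_univ]; exact hΔfin i⟩
    have H := integral_mul_norm_le_Lp_mul_Lq (μ := μ.restrict (Δ i))
      (f := fun _ => (1 : ℝ)) (g := fun x => |f x| ^ 2) hpq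
      (by rw [h2]; exact memLp_const 1) (by rw [h2]; exact hf2L2.restrict _)
    simp only [Real.norm_eq_abs, Real.rpow_two, abs_one, one_mul, abs_pow, abs_abs,
      one_pow, ← pow_mul, integral_const, Measure.restrict_apply_univ, smul_eq_mul,
      mul_one] at H
    norm_num at H
    simpa [sq_abs, hm, hFdef, Measure.real] using H
  -- decompose the integral over the partition
  have hsum : ∫ x, |f x| ^ 2 ∂μ = ∑ i, ∫ x in Δ i, |f x| ^ 2 ∂μ := by
    have habs : Integrable (fun x => |f x| ^ 2) μ := by
      have : (fun x => |f x| ^ 2) = fun x => f x ^ 2 := by funext x; rw [sq_abs]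
      rw [this]; exact hsq_int
    have hint : IntegrableOn (fun x => |f x| ^ 2) (⋃ i, Δ i) μ := by
      rw [hcover]; exact habs.integrableOn
    calc ∫ x, |f x| ^ 2 ∂μ = ∫ x in ⋃ i, Δ i, |f x| ^ 2 ∂μ := by
          rw [hcover, Measure.restrict_univ]
      _ = ∑' i, ∫ x in Δ i, |f x| ^ 2 ∂μ := integral_iUnion hmeas hdisj hint
      _ = ∑ i, ∫ x in Δ i, |f x| ^ 2 ∂μ := tsum_fintype _
  set S : ℝ := ∑ i, F i / LocTol i with hSdef
  have hSnonneg : 0 ≤ S :=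
    Finset.sum_nonneg fun i _ => div_nonneg (hFnonneg i) (hLpos i).le
  set M : ℝ := ⨆ i, m i with hMdef
  have hMge : ∀ i, m i ≤ M := fun i => le_ciSup (Set.Finite.bddAbove (Set.finite_range m)) i
  have hMpos : 0 < M := lt_of_lt_of_le (hmpos (Classical.arbitrary I)) (hMge _)
  -- total measure
  have hSm : ∑ i, m i = (μ Set.univ).toReal := by
    have h1 : μ Set.univ = ∑ i, μ (Δ i) := by
      rw [← hcover, measure_iUnion hdisj hmeas, tsum_fintype]
    rw [h1, ENNReal.toReal_sum fun i _ => (hΔfin i).ne]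
  -- discrete Cauchy–Schwarz
  have hcs : (∑ i, (m i) ^ ((1:ℝ)/2) * (F i) ^ ((1:ℝ)/2)) ^ 2 ≤
      S * ∑ i, LocTol i * m i := by
    refine Finset.sum_sq_le_sum_mul_sum_of_sq_eq_mul Finset.univ
      (f := fun i => F i / LocTol i) (g := fun i => LocTol i * m i) ?_ ?_ ?_
    · intro i _; exact div_nonneg (hFnonneg i) (hLpos i).le
    · intro i _; exact mul_nonneg (hLpos i).le (hmpos i).le
    · intro i _
      have hr : ((m i) ^ ((1:ℝ)/2) * (F i) ^ ((1:ℝ)/2)) ^ 2 = m i * F i := by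
        rw [mul_pow, ← Real.rpow_natCast ((m i) ^ ((1:ℝ)/2)) 2,
          ← Real.rpow_natCast ((F i) ^ ((1:ℝ)/2)) 2,
          ← Real.rpow_mul (hmpos i).le, ← Real.rpow_mul (hFnonneg i)]
        norm_num
      rw [hr]
      field_simp
      rw [eq_div_iff (hLpos i).ne']
  have hsum2 : ∑ i, LocTol i * m i ≤ TOL ^ 2 / 2 * M := by
    have h1 : ∀ i, LocTol i * m i ≤
        1 / 2 * TOL ^ 2 / (μ Set.univ).toReal * (M * m i) := by
      intro i
      rw [hLocTol i]
      have hMi := hMge i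
      have hmi := (hmpos i).le
      have hc : 0 < 1 / 2 * TOL ^ 2 / (μ Set.univ).toReal := by positivity
      calc 1 / 2 * TOL ^ 2 / (μ Set.univ).toReal * m i * m i
          ≤ 1 / 2 * TOL ^ 2 / (μ Set.univ).toReal * M * m i :=
            mul_le_mul_of_nonneg_right (mul_le_mul_of_nonneg_left hMi hc.le) hmi
        _ = 1 / 2 * TOL ^ 2 / (μ Set.univ).toReal * (M * m i) := by ring
    calc ∑ i, LocTol i * m i
        ≤ ∑ i, 1 / 2 * TOL ^ 2 / (μ Set.univ).toReal * (M * m i) :=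
          Finset.sum_le_sum fun i _ => h1 i
      _ = 1 / 2 * TOL ^ 2 / (μ Set.univ).toReal * M * ∑ i, m i := by
          rw [Finset.mul_sum]; congr 1; funext i; ring
      _ = TOL ^ 2 / 2 * M := by
          rw [hSm]; field_simp
  -- combine: L² norm of f bound
  have hK : 0 ≤ S * (TOL ^ 2 * (M / 2)) := by positivity
  have hF2 : ∫ x, |f x| ^ 2 ∂μ ≤ (S * (TOL ^ 2 * (M / 2))) ^ ((1:ℝ)/2) := by
    have hstep : ∫ x, |f x| ^ 2 ∂μ ≤ ∑ i, (m i) ^ ((1:ℝ)/2) * (F i) ^ ((1:ℝ)/2) := by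
      rw [hsum]; exact Finset.sum_le_sum fun i _ => hlocal i
    have hb : (∑ i, (m i) ^ ((1:ℝ)/2) * (F i) ^ ((1:ℝ)/2)) ^ 2 ≤
        S * (TOL ^ 2 * (M / 2)) := by
      refine hcs.trans ?_
      have : S * (TOL ^ 2 * (M / 2)) = S * (TOL ^ 2 / 2 * M) := by ring
      rw [this]
      exact mul_le_mul_of_nonneg_left hsum2 hSnonneg
    have hnn : 0 ≤ ∑ i, (m i) ^ ((1:ℝ)/2) * (F i) ^ ((1:ℝ)/2) :=
      Finset.sum_nonneg fun i _ =>
        mul_nonneg (Real.rpow_nonneg (hmpos i).le _) (Real.rpow_nonneg (hFnonneg i) _)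
    calc ∫ x, |f x| ^ 2 ∂μ ≤ ∑ i, (m i) ^ ((1:ℝ)/2) * (F i) ^ ((1:ℝ)/2) := hstep
      _ ≤ Real.sqrt (S * (TOL ^ 2 * (M / 2))) := (Real.le_sqrt hnn hK).2 hb
      _ = (S * (TOL ^ 2 * (M / 2))) ^ ((1:ℝ)/2) := Real.sqrt_eq_rpow _
  -- final assembly
  have hPnn : 0 ≤ ∫ x, |p x| ^ 2 ∂μ := integral_nonneg fun x => by positivity
  have hF2nn : 0 ≤ ∫ x, |f x| ^ 2 ∂μ := integral_nonneg fun x => by positivity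
  have hfinal : (∫ x, |f x| ^ 2 ∂μ) ^ ((1:ℝ)/2) ≤
      S ^ ((1:ℝ)/4) * (M / 2) ^ ((1:ℝ)/4) * TOL ^ ((1:ℝ)/2) := by
    have h1 : (∫ x, |f x| ^ 2 ∂μ) ^ ((1:ℝ)/2) ≤
        ((S * (TOL ^ 2 * (M / 2))) ^ ((1:ℝ)/2)) ^ ((1:ℝ)/2) :=
      Real.rpow_le_rpow hF2nn hF2 (by norm_num)
    have h2 : ((S * (TOL ^ 2 * (M / 2))) ^ ((1:ℝ)/2)) ^ ((1:ℝ)/2) =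
        S ^ ((1:ℝ)/4) * (M / 2) ^ ((1:ℝ)/4) * TOL ^ ((1:ℝ)/2) := by
      rw [← Real.rpow_mul hK]
      norm_num
      rw [Real.mul_rpow hSnonneg (by positivity),
        Real.mul_rpow (by positivity : (0:ℝ) ≤ TOL ^ 2) (by positivity : (0:ℝ) ≤ M / 2)]
      have : (TOL ^ 2) ^ ((1:ℝ)/4) = TOL ^ ((1:ℝ)/2) := by
        rw [← Real.rpow_natCast TOL 2, ← Real.rpow_mul hTOL.le]
        norm_num
      rw [this]
      ring
    exact h1.trans_eq h2
  calc ∫ x, p x * f x ∂μ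
      ≤ (∫ x, |p x| ^ 2 ∂μ) ^ ((1:ℝ)/2) * (∫ x, |f x| ^ 2 ∂μ) ^ ((1:ℝ)/2) := hglobal
    _ ≤ (∫ x, |p x| ^ 2 ∂μ) ^ ((1:ℝ)/2) *
        (S ^ ((1:ℝ)/4) * (M / 2) ^ ((1:ℝ)/4) * TOL ^ ((1:ℝ)/2)) := by
        exact mul_le_mul_of_nonneg_left hfinal (Real.rpow_nonneg hPnn _)
    _ = S ^ ((1:ℝ)/4) * (M / 2) ^ ((1:ℝ)/4) * TOL ^ ((1:ℝ)/2) *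
        (∫ x, |p x| ^ 2 ∂μ) ^ ((1:ℝ)/2) := by ring
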